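/- There is a constant C > 0 such that the following holds for all n and all 0 < L ≤ U with R = U/L. Suppose the current solution x has discrepancy d(x) ≤ U with respect to processing times p ∈ [L,U]^n, then the processing time of exactly one job is changed to an arbitrary new value in [L, U], and afterwards the processing times remain fixed. Then the expected number of iterations of RLS, and likewise of the (1+1) EA, started from x until a solution of discrepancy at most U (with respect to the new processing times) is obtained, is at most C · min{R, n}. -/

import Mathlib

open scoped BigOperators ENNReal

namespace MakespanDyn

/-- Load of machine `b` (machine `M₁` corresponds to `b = false`, `M₂` to `b = true`). -/
def load {n : ℕ} (p : Fin n → ℝ) (x : Fin n → Bool) (b : Bool) : ℝ :=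
  ∑ i, if x i = b then p i else 0

/-- The makespan of the solution `x` under processing times `p`. -/
def mspan {n : ℕ} (p : Fin n → ℝ) (x : Fin n → Bool) : ℝ :=
  max (load p x false) (load p x true)

/-- The discrepancy of the solution `x` under processing times `p`. -/
def disc {n : ℕ} (p : Fin n → ℝ) (x : Fin n → Bool) : ℝ :=
  |load p x false - load p x true|

/-- Flip bit `i` of `x`. -/
def flip {n : ℕ} (x : Fin n → Bool) (i : Fin n) : Fin n → Bool :=
  Function.update x i (!(x i))

/-- One iteration of RLS with processing times `p`: flip one uniformly random bit
and accept iff the makespan does not increase. -/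
noncomputable def rlsStep {n : ℕ} (hn : 0 < n) (p : Fin n → ℝ) (x : Fin n → Bool) :
    PMF (Fin n → Bool) :=
  haveI : Nonempty (Fin n) := Fin.pos_iff_nonempty.mp hn
  (PMF.uniformOfFintype (Fin n)).map fun i =>
    if mspan p (flip x i) ≤ mspan p x then flip x i else x

/-- The distribution of the mutation mask of the (1+1) EA: every bit is set
independently with probability `1/n`. -/
noncomputable def maskPMF (n : ℕ) (hn : 0 < n) : PMF (Fin n → Bool) :=
  ⟨fun m => ∏ i, (if m i then (n : ℝ≥0∞)⁻¹ else 1 - (n : ℝ≥0∞)⁻¹), by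
    classical
    have hinv : (n : ℝ≥0∞)⁻¹ ≤ 1 := ENNReal.inv_le_one.mpr (by exact_mod_cast hn)
    have hsum :
        ∑ m : Fin n → Bool, ∏ i, (if m i then (n : ℝ≥0∞)⁻¹ else 1 - (n : ℝ≥0∞)⁻¹) = 1 := by
      rw [← Fintype.piFinset_univ, ← Finset.prod_univ_sum
        (fun _ : Fin n => (Finset.univ : Finset Bool))
        (fun _ b => if b then (n : ℝ≥0∞)⁻¹ else 1 - (n : ℝ≥0∞)⁻¹)]
      have key : (n : ℝ≥0∞)⁻¹ + (1 - (n : ℝ≥0∞)⁻¹) = 1 := add_tsub_cancel_of_le hinv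
      simp [key]
    have := hasSum_fintype
      (fun m : Fin n → Bool => ∏ i, (if m i then (n : ℝ≥0∞)⁻¹ else 1 - (n : ℝ≥0∞)⁻¹))
    rwa [hsum] at this⟩

/-- One iteration of the (1+1) EA with processing times `p`: flip every bit
independently with probability `1/n` and accept iff the makespan does not increase. -/
noncomputable def eaStep {n : ℕ} (hn : 0 < n) (p : Fin n → ℝ) (x : Fin n → Bool) :
    PMF (Fin n → Bool) :=
  (maskPMF n hn).map fun m =>
    let y : Fin n → Bool := fun i => xor (m i) (x i)
    if mspan p y ≤ mspan p x then y else x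

/-- A configuration: a solution together with the current processing times. -/
abbrev Cfg (n : ℕ) := (Fin n → Bool) × (Fin n → ℝ)

/-- The run of an algorithm given by `step` with an adversary `adv`, which may
change the processing times (as an arbitrary function of the history) before each
iteration.  `run step adv init t` is the distribution of the history (most recent
configuration first) after `t` iterations. -/
noncomputable def run {n : ℕ} (step : (Fin n → ℝ) → (Fin n → Bool) → PMF (Fin n → Bool))
    (adv : List (Cfg n) → (Fin n → ℝ)) (init : Cfg n) : ℕ → PMF (List (Cfg n))
  | 0 => PMF.pure [init]
  | t + 1 =>
      (run step adv init t).bind fun h =>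
        (step (adv h) h.headI.1).map fun x' => (x', adv h) :: h

/-- The expected number of iterations until a configuration satisfying `good` occurs,
computed as `∑_{t ≥ 0} Pr(T > t)` where `T > t` iff no configuration in the history
after `t` iterations is good. -/
noncomputable def expectedHittingTime {σ : Type*} (runs : ℕ → PMF (List σ))
    (good : σ → Prop) : ℝ≥0∞ :=
  ∑' t, (runs t).toOuterMeasure {h | ∀ c ∈ h, ¬ good c}
set_option linter.dupNamespace false

open scoped Classical

/-- Expectation of an `ℝ≥0∞`-valued function under a `PMF`. -/
noncomputable def pexp {α : Type*} (p : PMF α) (φ : α → ℝ≥0∞) : ℝ≥0∞ := ∑' a, p a * φ a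

lemma pexp_pure {α : Type*} (a : α) (φ : α → ℝ≥0∞) : pexp (PMF.pure a) φ = φ a := by
  unfold pexp
  rw [tsum_eq_single a (by intro b hb; simp [PMF.pure_apply, hb])]
  simp

lemma pexp_bind {α β : Type*} (p : PMF α) (f : α → PMF β) (φ : β → ℝ≥0∞) :
    pexp (p.bind f) φ = ∑' a, p a * pexp (f a) φ := by
  unfold pexp
  simp_rw [PMF.bind_apply]
  rw [tsum_congr (fun b => (ENNReal.tsum_mul_right (f := fun a => p a * f a b)).symm)]
  rw [ENNReal.tsum_comm]
  simp_rw [mul_assoc, ENNReal.tsum_mul_left]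

lemma pexp_map {α β : Type*} (p : PMF α) (f : α → β) (φ : β → ℝ≥0∞) :
    pexp (p.map f) φ = pexp p (fun a => φ (f a)) := by
  rw [PMF.map, pexp_bind]
  unfold pexp
  congr 1
  funext a
  rw [show ((PMF.pure ∘ f) a) = PMF.pure (f a) from rfl]
  rw [show (∑' (a_1 : β), (PMF.pure (f a)) a_1 * φ a_1) = pexp (PMF.pure (f a)) φ from rfl,
    pexp_pure]

lemma pexp_mono {α : Type*} (p : PMF α) {φ ψ : α → ℝ≥0∞} (h : ∀ a, φ a ≤ ψ a) :
    pexp p φ ≤ pexp p ψ :=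
  Summable.tsum_le_tsum (fun a => mul_le_mul_right (h a) _) ENNReal.summable ENNReal.summable

lemma pexp_const {α : Type*} (p : PMF α) (c : ℝ≥0∞) : pexp p (fun _ => c) = c := by
  unfold pexp
  rw [ENNReal.tsum_mul_right, p.tsum_coe, one_mul]
lemma load_add {n : ℕ} (q : Fin n → ℝ) (x : Fin n → Bool) :
    load q x false + load q x true = ∑ i, q i := by
  unfold load
  rw [← Finset.sum_add_distrib]
  refine Finset.sum_congr rfl fun i _ => ?_
  cases hx : x i <;> simp [hx]

/-- Signed load difference towards machine `b`. -/
def dsign {n : ℕ} (q : Fin n → ℝ) (b : Bool) (y : Fin n → Bool) : ℝ :=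
  load q y b - load q y (!b)

lemma disc_eq_abs_dsign {n : ℕ} (q : Fin n → ℝ) (b : Bool) (y : Fin n → Bool) :
    disc q y = |dsign q b y| := by
  cases b <;> simp [disc, dsign, abs_sub_comm]

lemma load_dsign {n : ℕ} (q : Fin n → ℝ) (b : Bool) (y : Fin n → Bool) :
    load q y b = ((∑ i, q i) + dsign q b y) / 2 := by
  have h := load_add q y
  cases b <;> simp only [dsign, Bool.not_false, Bool.not_true] <;> linarith

lemma mspan_eq {n : ℕ} (q : Fin n → ℝ) (y : Fin n → Bool) :
    mspan q y = ((∑ i, q i) + disc q y) / 2 := by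
  unfold mspan disc
  rcases le_total (load q y false) (load q y true) with h | h
  · rw [max_eq_right h, abs_of_nonpos (by linarith)]
    have := load_add q y; linarith
  · rw [max_eq_left h, abs_of_nonneg (by linarith)]
    have := load_add q y; linarith

lemma mspan_le_iff {n : ℕ} (q : Fin n → ℝ) (y z : Fin n → Bool) :
    mspan q y ≤ mspan q z ↔ disc q y ≤ disc q z := by
  rw [mspan_eq, mspan_eq]
  constructor <;> intro h <;> linarith

lemma load_flip_same {n : ℕ} (q : Fin n → ℝ) (x : Fin n → Bool) (i : Fin n) :
    load q (flip x i) (x i) = load q x (x i) - q i := by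
  unfold load flip
  have h1 : ∀ j, (if Function.update x i (!x i) j = x i then q j else 0) =
      Function.update (fun j => if x j = x i then q j else 0) i 0 j := by
    intro j
    rcases eq_or_ne j i with rfl | hj
    · simp
    · simp [Function.update_of_ne hj]
  rw [Finset.sum_congr rfl fun j _ => h1 j,
    Finset.sum_update_of_mem (Finset.mem_univ i)]
  rw [Finset.sum_eq_sum_sdiff_singleton_add (Finset.mem_univ i)
    (fun j => if x j = x i then q j else 0)]
  simp

lemma load_flip_other {n : ℕ} (q : Fin n → ℝ) (x : Fin n → Bool) (i : Fin n) :
    load q (flip x i) (!x i) = load q x (!x i) + q i := by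
  unfold load flip
  have h1 : ∀ j, (if Function.update x i (!x i) j = !x i then q j else 0) =
      Function.update (fun j => if x j = !x i then q j else 0) i (q i) j := by
    intro j
    rcases eq_or_ne j i with rfl | hj
    · simp
    · simp [Function.update_of_ne hj]
  rw [Finset.sum_congr rfl fun j _ => h1 j,
    Finset.sum_update_of_mem (Finset.mem_univ i)]
  rw [Finset.sum_eq_sum_sdiff_singleton_add (Finset.mem_univ i)
    (fun j => if x j = !x i then q j else 0)]
  have : (if x i = !x i then q i else 0) = 0 := by
    cases hx : x i <;> simp [hx]
  rw [this]
  ring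

lemma dsign_flip_fuller {n : ℕ} (q : Fin n → ℝ) (x : Fin n → Bool) (i : Fin n) (b : Bool)
    (hb : x i = b) : dsign q b (flip x i) = dsign q b x - 2 * q i := by
  unfold dsign
  rw [← hb, load_flip_same, load_flip_other]
  ring

lemma dsign_flip_lighter {n : ℕ} (q : Fin n → ℝ) (x : Fin n → Bool) (i : Fin n) (b : Bool)
    (hb : x i ≠ b) : dsign q b (flip x i) = dsign q b x + 2 * q i := by
  have hb' : x i = !b := by cases hxi : x i <;> cases b <;> simp_all
  unfold dsign
  have h1 : load q (flip x i) b = load q x b + q i := by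
    have := load_flip_other q x i
    rwa [hb', Bool.not_not] at this
  have h2 : load q (flip x i) (!b) = load q x (!b) - q i := by
    have := load_flip_same q x i
    rwa [hb'] at this
  rw [h1, h2]
  ring

lemma exists_fuller {n : ℕ} (q : Fin n → ℝ) (x : Fin n → Bool) :
    ∃ b : Bool, dsign q b x = disc q x := by
  rcases le_total (load q x false) (load q x true) with h | h
  · exact ⟨true, by simp [dsign, disc, abs_of_nonpos (by linarith : load q x false - load q x true ≤ 0)]⟩
  · exact ⟨false, by simp [dsign, disc, abs_of_nonneg (by linarith : 0 ≤ load q x false - load q x true)]⟩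
/-- The drift potential. -/
noncomputable def pot {n : ℕ} (L U : ℝ) (q : Fin n → ℝ) (z : Fin n → Bool) : ℝ :=
  (6 * min (U / L) n / U) * max (disc q z - U) 0 +
    (if U < disc q z then 12 * min (U / L) n else 0)

noncomputable def potE {n : ℕ} (L U : ℝ) (q : Fin n → ℝ) (z : Fin n → Bool) : ℝ≥0∞ :=
  ENNReal.ofReal (pot L U q z)

lemma min_nonneg' {n : ℕ} {L U : ℝ} (hL : 0 < L) (hLU : L ≤ U) :
    0 ≤ min (U / L) (n : ℝ) :=
  le_min (div_nonneg (by linarith) hL.le) (Nat.cast_nonneg n)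

lemma pot_nonneg {n : ℕ} {L U : ℝ} (hL : 0 < L) (hLU : L ≤ U) (q : Fin n → ℝ)
    (z : Fin n → Bool) : 0 ≤ pot L U q z := by
  have hM := min_nonneg' (n := n) hL hLU
  have hU : 0 < U := lt_of_lt_of_le hL hLU
  unfold pot
  have h1 : 0 ≤ (6 * min (U / L) n / U) * max (disc q z - U) 0 :=
    mul_nonneg (div_nonneg (by linarith) hU.le) (le_max_right _ _)
  have h2 : 0 ≤ (if U < disc q z then 12 * min (U / L) (n : ℝ) else 0) := by
    split <;> linarith
  exact add_nonneg h1 h2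

lemma pot_mono {n : ℕ} {L U : ℝ} (hL : 0 < L) (hLU : L ≤ U) (q : Fin n → ℝ)
    {z y : Fin n → Bool} (h : disc q z ≤ disc q y) : pot L U q z ≤ pot L U q y := by
  have hM := min_nonneg' (n := n) hL hLU
  have hU : 0 < U := lt_of_lt_of_le hL hLU
  unfold pot
  have h1 : max (disc q z - U) 0 ≤ max (disc q y - U) 0 :=
    max_le_max (by linarith) le_rfl
  have h2 : (if U < disc q z then 12 * min (U / L) (n:ℝ) else 0) ≤
      (if U < disc q y then 12 * min (U / L) (n:ℝ) else 0) := by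
    split
    · rw [if_pos (by linarith)]
    · split <;> linarith
  have h3 : 0 < 6 * min (U / L) (n:ℝ) / U ∨ 0 ≤ 6 * min (U / L) (n:ℝ) / U :=
    Or.inr (div_nonneg (by linarith) hU.le)
  have := mul_le_mul_of_nonneg_left h1 (div_nonneg (by linarith : (0:ℝ) ≤ 6 * min (U/L) n) hU.le)
  linarith

/-- Core combinatorial drift inequality (real version). -/
lemma core_real {n : ℕ} {L U : ℝ} (hL : 0 < L) (hLU : L ≤ U) (q : Fin n → ℝ)
    (hq : ∀ i, q i ∈ Set.Icc L U) (x : Fin n → Bool) (hbad : U < disc q x) :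
    (∑ i : Fin n, pot L U q (if mspan q (flip x i) ≤ mspan q x then flip x i else x))
      + 3 * n ≤ n * pot L U q x := by
  have hU : 0 < U := lt_of_lt_of_le hL hLU
  set M := min (U / L) (n : ℝ) with hMdef
  have hM : 0 ≤ M := min_nonneg' hL hLU
  set d := disc q x with hddef
  obtain ⟨b, hb⟩ := exists_fuller q x
  -- per-index inequality
  have key : ∀ i : Fin n,
      pot L U q (if mspan q (flip x i) ≤ mspan q x then flip x i else x)
        + (12 * M / U) * (if x i = b then q i else 0) ≤ pot L U q x := by
    intro i
    have hqi := hq i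
    have hqiL : L ≤ q i := hqi.1
    have hqiU : q i ≤ U := hqi.2
    by_cases hxi : x i = b
    · -- job on the fuller machine: the flip is accepted
      have hdf : disc q (flip x i) = |d - 2 * q i| := by
        rw [disc_eq_abs_dsign q b, dsign_flip_fuller q x i b hxi, hb]
      have hacc : mspan q (flip x i) ≤ mspan q x := by
        rw [mspan_le_iff, hdf]
        rw [abs_le]
        constructor <;> linarith
      rw [if_pos hacc, if_pos hxi]
      by_cases hcase : U < d - 2 * q i
      · -- still bad after the flip
        have habs : |d - 2 * q i| = d - 2 * q i := abs_of_nonneg (by linarith)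
        unfold pot
        rw [hdf, habs, if_pos (by linarith : U < d - 2*q i),
          max_eq_left (by linarith : (0:ℝ) ≤ d - 2*q i - U), ← hddef,
          if_pos hbad, max_eq_left (by linarith : (0:ℝ) ≤ d - U), ← hMdef]
        have : 6 * M / U * (d - 2 * q i - U) + 12 * M / U * q i
            = 6 * M / U * (d - U) := by ring
        linarith
      · -- the flip reaches discrepancy at most U
        have habs : |d - 2 * q i| ≤ U := by
          rw [abs_le]; constructor <;> linarith
        unfold pot
        rw [hdf, if_neg (by linarith : ¬ U < |d - 2*q i|),
          max_eq_right (by linarith : |d - 2*q i| - U ≤ (0:ℝ)), ← hddef,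
          if_pos hbad, max_eq_left (by linarith : (0:ℝ) ≤ d - U), ← hMdef]
        have h1 : 12 * M / U * q i ≤ 12 * M := by
          rw [div_mul_eq_mul_div, div_le_iff₀ hU]
          nlinarith
        have h2 : 0 ≤ 6 * M / U * (d - U) :=
          mul_nonneg (div_nonneg (by linarith) hU.le) (by linarith)
        linarith
    · -- job on the lighter machine: the flip is rejected
      have hdf : disc q (flip x i) = d + 2 * q i := by
        rw [disc_eq_abs_dsign q b, dsign_flip_lighter q x i b hxi, hb]
        exact abs_of_nonneg (by linarith)
      have hrej : ¬ mspan q (flip x i) ≤ mspan q x := by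
        rw [mspan_le_iff, hdf]
        intro h
        linarith
      rw [if_neg hrej, if_neg hxi, mul_zero]
      linarith
  have hsum : (∑ i : Fin n, (pot L U q (if mspan q (flip x i) ≤ mspan q x then flip x i else x)
        + (12 * M / U) * (if x i = b then q i else 0)))
      ≤ ∑ _i : Fin n, pot L U q x := Finset.sum_le_sum (fun i _ => key i)
  rw [Finset.sum_add_distrib, ← Finset.mul_sum, Finset.sum_const, Finset.card_univ,
    Fintype.card_fin, nsmul_eq_mul] at hsum
  have hload : (∑ i : Fin n, if x i = b then q i else 0) = load q x b := rfl
  rw [hload, load_dsign q b x, hb, ← hddef] at hsum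
  -- numeric estimate
  have hP : (n : ℝ) * L ≤ ∑ i, q i := by
    calc (n : ℝ) * L = ∑ _i : Fin n, L := by
          rw [Finset.sum_const, Finset.card_univ, Fintype.card_fin, nsmul_eq_mul]
        _ ≤ ∑ i, q i := Finset.sum_le_sum (fun i _ => (hq i).1)
  have hnum : (n : ℝ) * U ≤ M * ((n : ℝ) * L + U) := by
    rcases min_cases (U / L) (n : ℝ) with ⟨hMeq, hle⟩ | ⟨hMeq, hle⟩
    · rw [hMdef, hMeq]
      have h1 : U / L * ((n:ℝ) * L) = (n:ℝ) * U := by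
        field_simp
      nlinarith [div_nonneg hU.le hL.le]
    · rw [hMdef, hMeq]
      nlinarith [mul_nonneg (mul_nonneg (Nat.cast_nonneg n : (0:ℝ) ≤ n) (Nat.cast_nonneg n)) hL.le]
  have hfinal : 3 * (n : ℝ) ≤ 12 * M / U * (((∑ i, q i) + d) / 2) := by
    have h1 : (n:ℝ) * L + U ≤ (∑ i, q i) + d := by linarith
    have h2 : M * ((n:ℝ) * L + U) ≤ M * ((∑ i, q i) + d) :=
      mul_le_mul_of_nonneg_left h1 hM
    have h3 : (n : ℝ) * U ≤ M * ((∑ i, q i) + d) := by linarith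
    rw [div_mul_eq_mul_div, le_div_iff₀ hU]
    nlinarith
  linarith
lemma core_enn {n : ℕ} {L U : ℝ} (hL : 0 < L) (hLU : L ≤ U) (q : Fin n → ℝ)
    (hq : ∀ i, q i ∈ Set.Icc L U) (x : Fin n → Bool) (hbad : U < disc q x) :
    (∑ i : Fin n, potE L U q (if mspan q (flip x i) ≤ mspan q x then flip x i else x))
      + 3 * n ≤ n * potE L U q x := by
  have hreal := core_real hL hLU q hq x hbad
  unfold potE
  have h1 : (∑ i : Fin n, ENNReal.ofReal
      (pot L U q (if mspan q (flip x i) ≤ mspan q x then flip x i else x)))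
      = ENNReal.ofReal (∑ i : Fin n,
        pot L U q (if mspan q (flip x i) ≤ mspan q x then flip x i else x)) :=
    (ENNReal.ofReal_sum_of_nonneg (fun i _ => pot_nonneg hL hLU q _)).symm
  rw [h1]
  have h2 : (3 * n : ℝ≥0∞) = ENNReal.ofReal (3 * n) := by
    rw [ENNReal.ofReal_mul (by norm_num)]
    simp [ENNReal.ofReal_natCast]
  have h3 : (n : ℝ≥0∞) * ENNReal.ofReal (pot L U q x) = ENNReal.ofReal (n * pot L U q x) := by
    rw [ENNReal.ofReal_mul (Nat.cast_nonneg n)]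
    simp [ENNReal.ofReal_natCast]
  rw [h2, h3, ← ENNReal.ofReal_add (Finset.sum_nonneg fun i _ => pot_nonneg hL hLU q _)
    (by positivity)]
  exact ENNReal.ofReal_le_ofReal hreal

lemma potE_mono {n : ℕ} {L U : ℝ} (hL : 0 < L) (hLU : L ≤ U) (q : Fin n → ℝ)
    {z y : Fin n → Bool} (h : disc q z ≤ disc q y) : potE L U q z ≤ potE L U q y :=
  ENNReal.ofReal_le_ofReal (pot_mono hL hLU q h)

lemma rls_drift {n : ℕ} (hn : 0 < n) {L U : ℝ} (hL : 0 < L) (hLU : L ≤ U) (q : Fin n → ℝ)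
    (hq : ∀ i, q i ∈ Set.Icc L U) (x : Fin n → Bool) (hbad : ¬ disc q x ≤ U) :
    pexp (rlsStep hn q x) (potE L U q) + 1 ≤ potE L U q x := by
  have hbad' : U < disc q x := lt_of_not_ge hbad
  haveI : Nonempty (Fin n) := Fin.pos_iff_nonempty.mp hn
  have hE : pexp (rlsStep hn q x) (potE L U q)
      = (n : ℝ≥0∞)⁻¹ * ∑ i : Fin n,
        potE L U q (if mspan q (flip x i) ≤ mspan q x then flip x i else x) := by
    rw [rlsStep, pexp_map]
    unfold pexp
    rw [tsum_fintype]
    simp_rw [PMF.uniformOfFintype_apply, Fintype.card_fin]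
    rw [← Finset.mul_sum]
  have hn' : (n : ℝ≥0∞) ≠ 0 := by exact_mod_cast hn.ne'
  have hntop : (n : ℝ≥0∞) ≠ ⊤ := ENNReal.natCast_ne_top n
  have hcore := core_enn hL hLU q hq x hbad'
  have step : (n : ℝ≥0∞)⁻¹ * ((∑ i : Fin n,
      potE L U q (if mspan q (flip x i) ≤ mspan q x then flip x i else x)) + 3 * n)
      ≤ (n : ℝ≥0∞)⁻¹ * ((n : ℝ≥0∞) * potE L U q x) := mul_le_mul_right hcore _
  have e1 : (n : ℝ≥0∞)⁻¹ * (3 * (n:ℝ≥0∞)) = 3 := by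
    rw [mul_comm (3:ℝ≥0∞) (n:ℝ≥0∞), ← mul_assoc, ENNReal.inv_mul_cancel hn' hntop, one_mul]
  have e2 : (n : ℝ≥0∞)⁻¹ * ((n : ℝ≥0∞) * potE L U q x) = potE L U q x := by
    rw [← mul_assoc, ENNReal.inv_mul_cancel hn' hntop, one_mul]
  rw [mul_add, e1, e2] at step
  rw [hE]
  calc (n : ℝ≥0∞)⁻¹ * (∑ i : Fin n,
      potE L U q (if mspan q (flip x i) ≤ mspan q x then flip x i else x)) + 1
      ≤ (n : ℝ≥0∞)⁻¹ * (∑ i : Fin n,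
      potE L U q (if mspan q (flip x i) ≤ mspan q x then flip x i else x)) + 3 := by
        exact add_le_add_right (by norm_num) _
    _ ≤ potE L U q x := step
lemma one_sub_inv_pow_real {n : ℕ} (hn : 0 < n) :
    (3 : ℝ)⁻¹ ≤ (1 - (n : ℝ)⁻¹) ^ (n - 1) := by
  rcases n with _ | _ | m
  · exact absurd hn (by norm_num)
  · norm_num
  · have hm1 : (0:ℝ) < (m:ℝ) + 1 := by positivity
    have hm2 : (0:ℝ) < (m:ℝ) + 2 := by positivity
    have hcast : ((m + 2 : ℕ) : ℝ) = (m : ℝ) + 2 := by push_cast; ring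
    have hsub : (1 : ℝ) - ((m + 2 : ℕ) : ℝ)⁻¹ = ((m:ℝ)+1) / ((m:ℝ)+2) := by
      rw [hcast]; field_simp; ring
    have hexp : ((m:ℝ)+2) / ((m:ℝ)+1) ≤ Real.exp (((m:ℝ)+1)⁻¹) := by
      have h1 : ((m:ℝ)+2) / ((m:ℝ)+1) = ((m:ℝ)+1)⁻¹ + 1 := by field_simp; ring
      rw [h1]
      exact Real.add_one_le_exp _
    have hpow : (((m:ℝ)+2) / ((m:ℝ)+1)) ^ (m+1) ≤ 3 := by
      calc (((m:ℝ)+2) / ((m:ℝ)+1)) ^ (m+1)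
          ≤ (Real.exp (((m:ℝ)+1)⁻¹)) ^ (m+1) :=
            pow_le_pow_left₀ (by positivity) hexp _
        _ = Real.exp 1 := by
            rw [← Real.exp_nat_mul]
            congr 1
            push_cast
            field_simp
        _ ≤ 3 := by
            have := Real.exp_one_lt_d9
            linarith
    have hinv : (((m:ℝ)+1) / ((m:ℝ)+2)) ^ (m+1)
        = ((((m:ℝ)+2) / ((m:ℝ)+1)) ^ (m+1))⁻¹ := by
      rw [← inv_pow]
      congr 1
      rw [inv_div]
    have hge : (3:ℝ)⁻¹ ≤ (((m:ℝ)+1) / ((m:ℝ)+2)) ^ (m+1) := by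
      rw [hinv]
      apply inv_anti₀
      · positivity
      · exact hpow
    have e : m + 1 + 1 - 1 = m + 1 := by omega
    rw [e, hsub]
    exact hge

lemma c_bound_enn {n : ℕ} (hn : 0 < n) :
    (3 : ℝ≥0∞)⁻¹ ≤ (1 - (n : ℝ≥0∞)⁻¹) ^ (n - 1) := by
  have hinv : (n : ℝ≥0∞)⁻¹ = ENNReal.ofReal ((n : ℝ)⁻¹) := by
    rw [ENNReal.ofReal_inv_of_pos (by exact_mod_cast hn), ENNReal.ofReal_natCast]
  have hr : (0:ℝ) ≤ (n : ℝ)⁻¹ := by positivity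
  have hone : (1 : ℝ≥0∞) - (n : ℝ≥0∞)⁻¹ = ENNReal.ofReal (1 - (n : ℝ)⁻¹) := by
    rw [hinv, ← ENNReal.ofReal_one, ← ENNReal.ofReal_sub _ hr]
  have hnn : (0:ℝ) ≤ 1 - (n : ℝ)⁻¹ := by
    have : (n : ℝ)⁻¹ ≤ 1 := by
      rw [inv_le_one_iff₀]
      right
      exact_mod_cast hn
    linarith
  rw [hone, ← ENNReal.ofReal_pow hnn]
  have h3 : (3 : ℝ≥0∞)⁻¹ = ENNReal.ofReal ((3:ℝ)⁻¹) := by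
    rw [ENNReal.ofReal_inv_of_pos (by norm_num)]
    norm_num
  rw [h3]
  exact ENNReal.ofReal_le_ofReal (one_sub_inv_pow_real hn)

/-- The mask with exactly bit `j` set. -/
def sing {n : ℕ} (j : Fin n) : Fin n → Bool := fun i => decide (i = j)

lemma sing_inj {n : ℕ} : Function.Injective (sing (n := n)) := by
  intro a b h
  have := congrFun h a
  simp [sing] at this
  exact this

lemma weight_sing {n : ℕ} (hn : 0 < n) (j : Fin n) :
    maskPMF n hn (sing j) = (n : ℝ≥0∞)⁻¹ * (1 - (n : ℝ≥0∞)⁻¹) ^ (n - 1) := by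
  show (∏ i, if sing j i then (n : ℝ≥0∞)⁻¹ else 1 - (n : ℝ≥0∞)⁻¹) = _
  rw [← Finset.mul_prod_erase Finset.univ _ (Finset.mem_univ j)]
  congr 1
  · simp [sing]
  · rw [Finset.prod_congr rfl (fun i hi => ?_), Finset.prod_const,
      Finset.card_erase_of_mem (Finset.mem_univ j), Finset.card_univ, Fintype.card_fin]
    have hij : i ≠ j := Finset.ne_of_mem_erase hi
    simp [sing, hij]

lemma flip_eq_sing {n : ℕ} (x : Fin n → Bool) (j : Fin n) :
    (fun i => xor (sing j i) (x i)) = flip x j := by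
  funext i
  rcases eq_or_ne i j with rfl | hij
  · simp [sing, flip]
  · simp [sing, hij, flip, Function.update_of_ne hij]

lemma ea_drift {n : ℕ} (hn : 0 < n) {L U : ℝ} (hL : 0 < L) (hLU : L ≤ U) (q : Fin n → ℝ)
    (hq : ∀ i, q i ∈ Set.Icc L U) (x : Fin n → Bool) (hbad : ¬ disc q x ≤ U) :
    pexp (eaStep hn q x) (potE L U q) + 1 ≤ potE L U q x := by
  classical
  have hbad' : U < disc q x := lt_of_not_ge hbad
  set w := maskPMF n hn with hw
  set F : (Fin n → Bool) → (Fin n → Bool) := fun m =>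
    if mspan q (fun i => xor (m i) (x i)) ≤ mspan q x then (fun i => xor (m i) (x i)) else x
    with hF
  have hE : pexp (eaStep hn q x) (potE L U q) = ∑ m : Fin n → Bool, w m * potE L U q (F m) := by
    rw [eaStep, pexp_map]
    unfold pexp
    rw [tsum_fintype]
  have hFmono : ∀ m, disc q (F m) ≤ disc q x := by
    intro m
    rw [hF]
    dsimp only
    split
    · exact (mspan_le_iff q _ x).mp (by assumption)
    · exact le_rfl
  have hsum1 : ∑ m : Fin n → Bool, w m = 1 := by
    rw [← w.tsum_coe, tsum_fintype]
  have hVx : potE L U q x = ∑ m : Fin n → Bool, w m * potE L U q x := by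
    rw [← Finset.sum_mul, hsum1, one_mul]
  set S : Finset (Fin n → Bool) := Finset.image sing Finset.univ with hS
  have hsplit : ∀ φ : (Fin n → Bool) → ℝ≥0∞,
      (∑ m : Fin n → Bool, φ m) = (∑ m ∈ S, φ m) + ∑ m ∈ Sᶜ, φ m := by
    intro φ
    rw [Finset.sum_add_sum_compl]
  rw [hE, hVx, hsplit (fun m => w m * potE L U q (F m)),
    hsplit (fun m => w m * potE L U q x)]
  have hA : (∑ m ∈ Sᶜ, w m * potE L U q (F m)) ≤ ∑ m ∈ Sᶜ, w m * potE L U q x :=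
    Finset.sum_le_sum fun m _ => mul_le_mul_right (potE_mono hL hLU q (hFmono m)) _
  have hB : (∑ m ∈ S, w m * potE L U q (F m)) + 1 ≤ ∑ m ∈ S, w m * potE L U q x := by
    rw [hS, Finset.sum_image (fun a _ b _ h => sing_inj h),
      Finset.sum_image (fun a _ b _ h => sing_inj h)]
    set c : ℝ≥0∞ := (n : ℝ≥0∞)⁻¹ * (1 - (n : ℝ≥0∞)⁻¹) ^ (n - 1) with hc
    have hFs : ∀ j : Fin n, F (sing j)
        = if mspan q (flip x j) ≤ mspan q x then flip x j else x := by
      intro j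
      rw [hF]
      dsimp only
      rw [flip_eq_sing]
    have hws : ∀ j : Fin n, w (sing j) = c := fun j => weight_sing hn j
    simp_rw [hws, hFs]
    rw [← Finset.mul_sum, ← Finset.mul_sum, Finset.sum_const, Finset.card_univ,
      Fintype.card_fin, nsmul_eq_mul]
    have hn' : (n : ℝ≥0∞) ≠ 0 := by exact_mod_cast hn.ne'
    have hntop : (n : ℝ≥0∞) ≠ ⊤ := ENNReal.natCast_ne_top n
    have h1c : 1 ≤ c * (3 * n) := by
      rw [hc]
      calc (1:ℝ≥0∞) = 3⁻¹ * 3 := by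
            rw [ENNReal.inv_mul_cancel (by norm_num) (by norm_num)]
        _ ≤ (1 - (n : ℝ≥0∞)⁻¹) ^ (n - 1) * 3 := mul_le_mul_left (c_bound_enn hn) _
        _ = (n : ℝ≥0∞)⁻¹ * (1 - (n : ℝ≥0∞)⁻¹) ^ (n - 1) * (3 * n) := by
            rw [mul_comm ((n : ℝ≥0∞)⁻¹) _, mul_assoc, mul_comm (3:ℝ≥0∞) (n:ℝ≥0∞),
              ← mul_assoc ((n : ℝ≥0∞)⁻¹) (n:ℝ≥0∞) 3,
              ENNReal.inv_mul_cancel hn' hntop, one_mul]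
    calc c * (∑ j : Fin n,
          potE L U q (if mspan q (flip x j) ≤ mspan q x then flip x j else x)) + 1
        ≤ c * (∑ j : Fin n,
          potE L U q (if mspan q (flip x j) ≤ mspan q x then flip x j else x)) + c * (3 * n) :=
          add_le_add_right h1c _
      _ = c * ((∑ j : Fin n,
          potE L U q (if mspan q (flip x j) ≤ mspan q x then flip x j else x)) + 3 * n) := by
          rw [mul_add]
      _ ≤ c * ((n : ℝ≥0∞) * potE L U q x) :=
          mul_le_mul_right (core_enn hL hLU q hq x hbad') _
  calc (∑ m ∈ S, w m * potE L U q (F m)) + (∑ m ∈ Sᶜ, w m * potE L U q (F m)) + 1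
      = ((∑ m ∈ S, w m * potE L U q (F m)) + 1) + ∑ m ∈ Sᶜ, w m * potE L U q (F m) := by ring
    _ ≤ (∑ m ∈ S, w m * potE L U q x) + ∑ m ∈ Sᶜ, w m * potE L U q x := add_le_add hB hA
lemma run_head {n : ℕ} (step : (Fin n → ℝ) → (Fin n → Bool) → PMF (Fin n → Bool))
    (q : Fin n → ℝ) (x : Fin n → Bool) :
    ∀ t, ∀ h ∈ (run step (fun _ => q) (x, q) t).support, h.headI ∈ h ∧ h.headI.2 = q := by
  intro t
  induction t with
  | zero =>
    intro h hh
    simp only [run, PMF.support_pure, Set.mem_singleton_iff] at hh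
    subst hh
    exact ⟨List.mem_cons_self, rfl⟩
  | succ t ih =>
    intro h hh
    simp only [run, PMF.mem_support_bind_iff, PMF.mem_support_map_iff] at hh
    obtain ⟨h0, _, x', _, rfl⟩ := hh
    exact ⟨List.mem_cons_self, rfl⟩

lemma eht_le {n : ℕ} (step : (Fin n → ℝ) → (Fin n → Bool) → PMF (Fin n → Bool))
    (q : Fin n → ℝ) (U : ℝ) (V : (Fin n → Bool) → ℝ≥0∞) (x : Fin n → Bool)
    (hd : ∀ z : Fin n → Bool, ¬ disc q z ≤ U → pexp (step q z) V + 1 ≤ V z) :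
    expectedHittingTime (run step (fun _ => q) (x, q)) (fun c => disc c.2 c.1 ≤ U) ≤ V x := by
  classical
  set R : ℕ → PMF (List (Cfg n)) := run step (fun _ => q) (x, q) with hR
  set I : List (Cfg n) → ℝ≥0∞ :=
    fun h => if ∀ c ∈ h, ¬ disc c.2 c.1 ≤ U then 1 else 0 with hI
  set ψ : List (Cfg n) → ℝ≥0∞ := fun h => I h * V h.headI.1 with hψ
  have hIle : ∀ h, I h ≤ 1 := by
    intro h
    rw [hI]
    dsimp only
    split <;> simp
  have hB : ∀ t, (R t).toOuterMeasure {h | ∀ c ∈ h, ¬ disc c.2 c.1 ≤ U} = pexp (R t) I := by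
    intro t
    rw [PMF.toOuterMeasure_apply]
    refine tsum_congr fun h => ?_
    rw [hI]
    dsimp only
    by_cases hh : ∀ c ∈ h, ¬ disc c.2 c.1 ≤ U
    · rw [Set.indicator_of_mem
        (show h ∈ {h : List (Cfg n) | ∀ c ∈ h, ¬ disc c.2 c.1 ≤ U} from hh),
        if_pos hh, mul_one]
    · rw [Set.indicator_of_notMem
        (show h ∉ {h : List (Cfg n) | ∀ c ∈ h, ¬ disc c.2 c.1 ≤ U} from hh),
        if_neg hh, mul_zero]
  have hstep : ∀ t, pexp (R t) I + pexp (R (t + 1)) ψ ≤ pexp (R t) ψ := by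
    intro t
    have hexp : pexp (R (t + 1)) ψ
        = ∑' h, R t h * pexp (step q h.headI.1) (fun x' => ψ ((x', q) :: h)) := by
      rw [hR]
      show pexp ((run step (fun _ => q) (x, q) t).bind fun h =>
        (step ((fun _ => q) h) h.headI.1).map fun x' => (x', (fun _ => q) h) :: h) ψ = _
      rw [pexp_bind]
      exact tsum_congr fun h => by rw [pexp_map]
    rw [hexp,
      show pexp (R t) I = ∑' h, R t h * I h from rfl,
      show pexp (R t) ψ = ∑' h, R t h * ψ h from rfl,
      ← ENNReal.tsum_add]
    refine Summable.tsum_le_tsum (fun h => ?_) ENNReal.summable ENNReal.summable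
    rw [← mul_add]
    rcases eq_or_ne (R t h) 0 with h0 | h0
    · rw [h0, zero_mul, zero_mul]
    · refine mul_le_mul_right ?_ _
      by_cases hall : ∀ c ∈ h, ¬ disc c.2 c.1 ≤ U
      · have hIh : I h = 1 := if_pos hall
        obtain ⟨hmem, hsnd⟩ := run_head step q x t h (by rwa [PMF.mem_support_iff])
        have hbadhead : ¬ disc q h.headI.1 ≤ U := by
          have := hall h.headI hmem
          rwa [hsnd] at this
        have hinner : pexp (step q h.headI.1) (fun x' => ψ ((x', q) :: h))
            ≤ pexp (step q h.headI.1) V := by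
          refine pexp_mono _ fun x' => ?_
          rw [hψ]
          dsimp only
          calc I ((x', q) :: h) * V ((x', q) :: h).headI.1
              ≤ 1 * V x' := mul_le_mul' (hIle _) le_rfl
            _ = V x' := one_mul _
        calc I h + pexp (step q h.headI.1) (fun x' => ψ ((x', q) :: h))
            ≤ 1 + pexp (step q h.headI.1) V := add_le_add (le_of_eq hIh) hinner
          _ = pexp (step q h.headI.1) V + 1 := add_comm _ _
          _ ≤ V h.headI.1 := hd _ hbadhead
          _ = ψ h := by rw [hψ]; dsimp only; rw [hIh, one_mul]
      · have hIh : I h = 0 := if_neg hall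
        have hinner0 : pexp (step q h.headI.1) (fun x' => ψ ((x', q) :: h)) = 0 := by
          have hz : ∀ x', ψ ((x', q) :: h) = 0 := by
            intro x'
            have hnall : ¬ ∀ c ∈ (x', q) :: h, ¬ disc c.2 c.1 ≤ U := by
              intro hcontra
              exact hall fun c hc => hcontra c (List.mem_cons_of_mem _ hc)
            rw [hψ]
            dsimp only
            rw [hI]
            simp only [hnall, if_false]
            exact zero_mul _
          unfold pexp
          simp [hz]
        rw [hIh, hinner0, zero_add]
        exact zero_le
  have htel : ∀ T, (∑ t ∈ Finset.range T, pexp (R t) I) + pexp (R T) ψ ≤ pexp (R 0) ψ := by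
    intro T
    induction T with
    | zero => simp
    | succ T ih =>
      rw [Finset.sum_range_succ, add_assoc]
      calc (∑ t ∈ Finset.range T, pexp (R t) I) + (pexp (R T) I + pexp (R (T + 1)) ψ)
          ≤ (∑ t ∈ Finset.range T, pexp (R t) I) + pexp (R T) ψ :=
            add_le_add_right (hstep T) _
        _ ≤ pexp (R 0) ψ := ih
  have h0 : pexp (R 0) ψ ≤ V x := by
    rw [hR]
    show pexp (PMF.pure [(x, q)]) ψ ≤ V x
    rw [pexp_pure, hψ]
    dsimp only
    calc I [(x, q)] * V x ≤ 1 * V x := mul_le_mul' (hIle _) le_rfl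
      _ = V x := one_mul _
  rw [expectedHittingTime]
  calc (∑' t, (R t).toOuterMeasure {h | ∀ c ∈ h, ¬ disc c.2 c.1 ≤ U})
      = ∑' t, pexp (R t) I := tsum_congr hB
    _ ≤ V x := by
      refine ENNReal.tsum_le_of_sum_range_le fun T => ?_
      exact le_trans (le_trans le_self_add (htel T)) h0
lemma load_diff {n : ℕ} (p q : Fin n → ℝ) (x : Fin n → Bool) (b : Bool) (k : Fin n)
    (hk : ∀ i, i ≠ k → q i = p i) :
    load q x b - load p x b = (if x k = b then q k - p k else 0) := by
  unfold load
  rw [← Finset.sum_sub_distrib]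
  rw [Finset.sum_eq_single k]
  · split <;> simp
  · intro i _ hik
    rw [hk i hik]
    ring
  · intro hcon
    exact absurd (Finset.mem_univ k) hcon

lemma disc_close {n : ℕ} (p q : Fin n → ℝ) (x : Fin n → Bool) (k : Fin n)
    (hk : ∀ i, i ≠ k → q i = p i) (c : ℝ) (habs : |q k - p k| ≤ c) :
    disc q x ≤ disc p x + c := by
  have h1 := load_diff p q x false k hk
  have h2 := load_diff p q x true k hk
  have hd : |dsign q false x - dsign p false x| ≤ c := by
    unfold dsign
    simp only [Bool.not_false]
    have : load q x false - load q x true - (load p x false - load p x true)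
        = (load q x false - load p x false) - (load q x true - load p x true) := by ring
    rw [show load q x false - load q x true - (load p x false - load p x true)
        = (load q x false - load p x false) - (load q x true - load p x true) from by ring,
      h1, h2]
    rw [abs_le] at habs ⊢
    rcases habs with ⟨ha, hb⟩
    cases hxk : x k <;> simp [hxk] <;> constructor <;> linarith
  have e1 : disc q x = |dsign q false x| := disc_eq_abs_dsign q false x
  have e2 : disc p x = |dsign p false x| := disc_eq_abs_dsign p false x
  rw [e1, e2]
  have := abs_sub_abs_le_abs_sub (dsign q false x) (dsign p false x)
  linarith

theorem recover_discrepancy' :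
    ∃ C : ℝ, 0 < C ∧
      ∀ (n : ℕ) (hn : 0 < n) (L U : ℝ), 0 < L → L ≤ U →
        ∀ p p' : Fin n → ℝ, (∀ i, p i ∈ Set.Icc L U) → (∀ i, p' i ∈ Set.Icc L U) →
          (∃ k, ∀ i, i ≠ k → p' i = p i) →
          ∀ x : Fin n → Bool, disc p x ≤ U →
            expectedHittingTime (run (rlsStep hn) (fun _ => p') (x, p'))
                (fun c => disc c.2 c.1 ≤ U) ≤
              ENNReal.ofReal (C * min (U / L) n) ∧
            expectedHittingTime (run (eaStep hn) (fun _ => p') (x, p'))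
                (fun c => disc c.2 c.1 ≤ U) ≤
              ENNReal.ofReal (C * min (U / L) n) := by
  refine ⟨18, by norm_num, ?_⟩
  intro n hn L U hL hLU p q hp hq ⟨k, hk⟩ x hdx
  have hU : 0 < U := lt_of_lt_of_le hL hLU
  set M := min (U / L) (n : ℝ) with hM
  have hM0 : 0 ≤ M := min_nonneg' hL hLU
  -- bound on the initial potential
  have hclose : disc q x ≤ disc p x + (U - L) := by
    refine disc_close p q x k hk (U - L) ?_
    have h1 := (hq k).1
    have h2 := (hq k).2
    have h3 := (hp k).1
    have h4 := (hp k).2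
    rw [abs_le]
    constructor <;> linarith
  have hdisc : disc q x ≤ 2 * U := by linarith
  have hpot : pot L U q x ≤ 18 * M := by
    unfold pot
    rw [← hM]
    have hmax : max (disc q x - U) 0 ≤ U := by
      rw [max_le_iff]
      constructor <;> linarith
    have h1 : 6 * M / U * max (disc q x - U) 0 ≤ 6 * M := by
      calc 6 * M / U * max (disc q x - U) 0 ≤ 6 * M / U * U :=
            mul_le_mul_of_nonneg_left hmax (by positivity)
        _ = 6 * M := by field_simp
    have h2 : (if U < disc q x then 12 * M else 0) ≤ 12 * M := by
      split <;> linarith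
    linarith
  have hpotE : potE L U q x ≤ ENNReal.ofReal (18 * M) :=
    ENNReal.ofReal_le_ofReal hpot
  constructor
  · exact le_trans
      (eht_le (rlsStep hn) q U (potE L U q) x
        (fun z hz => rls_drift hn hL hLU q hq z hz))
      hpotE
  · exact le_trans
      (eht_le (eaStep hn) q U (potE L U q) x
        (fun z hz => ea_drift hn hL hLU q hq z hz))
      hpotE


/-- If the current solution `x` has discrepancy at most `U` w.r.t.
processing times `p`, and the processing time of exactly one job is changed to an
arbitrary new value in `[L, U]` (yielding `p'`, which afterwards remains fixed), then
the expected time of RLS, and likewise of the (1+1) EA, started from `x` until a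
solution of discrepancy at most `U` w.r.t. `p'` is obtained is `O(min{R, n})` where
`R = U / L`. -/
theorem recover_discrepancy :
    ∃ C : ℝ, 0 < C ∧
      ∀ (n : ℕ) (hn : 0 < n) (L U : ℝ), 0 < L → L ≤ U →
        ∀ p p' : Fin n → ℝ, (∀ i, p i ∈ Set.Icc L U) → (∀ i, p' i ∈ Set.Icc L U) →
          (∃ k, ∀ i, i ≠ k → p' i = p i) →
          ∀ x : Fin n → Bool, disc p x ≤ U →
            expectedHittingTime (run (rlsStep hn) (fun _ => p') (x, p'))
                (fun c => disc c.2 c.1 ≤ U) ≤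
              ENNReal.ofReal (C * min (U / L) n) ∧
            expectedHittingTime (run (eaStep hn) (fun _ => p') (x, p'))
                (fun c => disc c.2 c.1 ≤ U) ≤
              ENNReal.ofReal (C * min (U / L) n) := by
  exact recover_discrepancy'

end MakespanDyn
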